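/- The pure 2-dimensional simplicial complex P(2) on vertex set {1,...,6} with 2-faces [1,2,6], [1,3,6], [2,4,6], [3,5,6], [2,3,4], [2,3,5], [1,3,4], [1,4,5], [1,2,5] has first homology group with ℤ coefficients isomorphic to ℤ. -/

import Mathlib

/-- A (labeled abstract) simplicial complex on vertex set `Fin n`: a collection of
nonempty finite sets closed under taking nonempty subsets. -/
def IsComplex {n : ℕ} (X : Finset (Finset (Fin n))) : Prop :=
  (∀ σ ∈ X, σ.Nonempty) ∧ ∀ σ ∈ X, ∀ τ, τ ⊆ σ → τ.Nonempty → τ ∈ X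

/-- The `i`-dimensional faces of `X` (sets of `i + 1` vertices). -/
def Face {n : ℕ} (X : Finset (Finset (Fin n))) (i : ℕ) :=
  {σ : Finset (Fin n) // σ ∈ X ∧ σ.card = i + 1}

/-- Simplicial `i`-chains with integer coefficients. -/
abbrev Chain {n : ℕ} (X : Finset (Finset (Fin n))) (i : ℕ) := Face X i →₀ ℤ

/-- The simplicial boundary map `∂ : C_{i+1} → C_i`. -/
noncomputable def boundary {n : ℕ} (X : Finset (Finset (Fin n))) (i : ℕ) :
    Chain X (i + 1) →ₗ[ℤ] Chain X i :=
  Finsupp.lsum ℤ fun σ => LinearMap.toSpanSingleton ℤ _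
    (∑ v ∈ σ.1.attach,
      if h : σ.1.erase v.1 ∈ X then
        ((-1 : ℤ) ^ ((σ.1.filter (· < v.1)).card)) •
          Finsupp.single (⟨σ.1.erase v.1, h, by
            rw [Finset.card_erase_of_mem v.2, σ.2.2]; omega⟩ : Face X i) 1
      else 0)

/-- The submodule of `i`-cycles. -/
noncomputable def cycles {n : ℕ} (X : Finset (Finset (Fin n))) : (i : ℕ) → Submodule ℤ (Chain X i)
  | 0 => ⊤
  | (j + 1) => LinearMap.ker (boundary X j)

/-- The submodule of `i`-boundaries. -/
noncomputable def boundaries {n : ℕ} (X : Finset (Finset (Fin n))) (i : ℕ) :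
    Submodule ℤ (Chain X i) :=
  LinearMap.range (boundary X i)

/-- The `i`-th simplicial homology group of `X` with `ℤ` coefficients. -/
noncomputable def Homology {n : ℕ} (X : Finset (Finset (Fin n))) (i : ℕ) :=
  cycles X i ⧸ Submodule.comap (cycles X i).subtype (boundaries X i)

noncomputable instance {n : ℕ} (X : Finset (Finset (Fin n))) (i : ℕ) :
    AddCommGroup (Homology X i) := by unfold Homology; infer_instance

noncomputable instance {n : ℕ} (X : Finset (Finset (Fin n))) (i : ℕ) :
    Module ℤ (Homology X i) := by unfold Homology; infer_instance

/-- The nine 2-dimensional faces of `P(2)` (the punctured 6-vertex triangulation of the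
real projective plane), on vertex set `{0, …, 5}` (relabeling `{1, …, 6}`). -/
def P2triangles : Finset (Finset (Fin 6)) :=
  {{0, 1, 5}, {0, 2, 5}, {1, 3, 5}, {2, 4, 5}, {1, 2, 3}, {1, 2, 4}, {0, 2, 3},
    {0, 3, 4}, {0, 1, 4}}

/-- The complex `P(2)`: all nonempty subsets of the nine triangles. -/
def P2 : Finset (Finset (Fin 6)) :=
  Finset.univ.filter fun σ => σ.Nonempty ∧ ∃ τ ∈ P2triangles, σ ⊆ τ

section Aux

open Finsupp

instance faceDecEq {n : ℕ} (X : Finset (Finset (Fin n))) (i : ℕ) : DecidableEq (Face X i) := by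
  unfold Face; infer_instance

instance faceFintype {n : ℕ} (X : Finset (Finset (Fin n))) (i : ℕ) : Fintype (Face X i) := by
  unfold Face; infer_instance

noncomputable def bd {n : ℕ} (X : Finset (Finset (Fin n))) (i : ℕ) (σ : Face X (i + 1)) : Chain X i :=
  ∑ v ∈ σ.1,
    if h : σ.1.erase v ∈ X ∧ (σ.1.erase v).card = i + 1 then
      ((-1 : ℤ) ^ ((σ.1.filter (· < v)).card)) • Finsupp.single (⟨σ.1.erase v, h⟩ : Face X i) 1
    else 0

/-- Scalar boundary coefficient: coefficient of `t` in `∂ s`. -/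
def bdc {n : ℕ} (s t : Finset (Fin n)) : ℤ :=
  ∑ v ∈ s, if s.erase v = t then ((-1 : ℤ) ^ ((s.filter (· < v)).card)) else 0

lemma bd_apply {n : ℕ} (X : Finset (Finset (Fin n))) (i : ℕ) (σ : Face X (i + 1))
    (e : Face X i) : bd X i σ e = bdc σ.1 e.1 := by
  unfold bd bdc
  rw [Finset.sum_apply']
  refine Finset.sum_congr rfl fun v _ => ?_
  by_cases h : σ.1.erase v ∈ X ∧ (σ.1.erase v).card = i + 1
  · rw [dif_pos h]
    erw [Finsupp.smul_apply]
    classical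
    erw [Finsupp.single_apply]
    by_cases he : σ.1.erase v = e.1
    · erw [if_pos (Subtype.ext he), if_pos he, smul_eq_mul, mul_one]
    · erw [if_neg (fun hh => he (congrArg Subtype.val hh)), if_neg he, smul_eq_mul, mul_zero]
  · rw [dif_neg h]
    have he : ¬(σ.1.erase v = e.1) := fun he => h (he ▸ e.2)
    rw [if_neg he, Finsupp.zero_apply]

lemma boundary_single {n : ℕ} (X : Finset (Finset (Fin n))) (i : ℕ) (σ : Face X (i + 1)) :
    boundary X i (Finsupp.single σ 1) = bd X i σ := by
  unfold boundary bd
  rw [Finsupp.lsum_single, LinearMap.toSpanSingleton_apply, one_smul]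
  refine Eq.trans ?_ (Finset.sum_attach σ.1 (fun v =>
      if h : σ.1.erase v ∈ X ∧ (σ.1.erase v).card = i + 1 then
        ((-1 : ℤ) ^ ((σ.1.filter (· < v)).card)) • Finsupp.single (⟨σ.1.erase v, h⟩ : Face X i) 1
      else 0))
  refine Finset.sum_congr rfl fun v _ => ?_
  by_cases h : σ.1.erase v.1 ∈ X
  · have hc : (σ.1.erase v.1).card = i + 1 := by
      rw [Finset.card_erase_of_mem v.2, σ.2.2]; omega
    rw [dif_pos h, dif_pos ⟨h, hc⟩]; rfl
  · rw [dif_neg h, dif_neg (fun hh => h hh.1)]; rfl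

lemma boundary_apply {n : ℕ} (X : Finset (Finset (Fin n))) (i : ℕ) (f : Chain X (i + 1)) :
    boundary X i f = f.sum fun σ a => a • bd X i σ := by
  conv_lhs => rw [← Finsupp.sum_single f]
  rw [map_finsuppSum]
  refine Finsupp.sum_congr fun σ _ => ?_
  rw [show Finsupp.single σ (f σ) = f σ • Finsupp.single σ 1 by
        rw [Finsupp.smul_single', mul_one],
    map_smul, boundary_single]

lemma boundary_apply_pt {n : ℕ} (X : Finset (Finset (Fin n))) (i : ℕ) (f : Chain X (i + 1))
    (e : Face X i) : boundary X i f e = ∑ σ : Face X (i + 1), f σ * bdc σ.1 e.1 := by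
  rw [boundary_apply, Finsupp.sum_apply,
    Finsupp.sum_fintype _ _ (fun σ => by rw [zero_smul, Finsupp.zero_apply])]
  exact Finset.sum_congr rfl fun σ _ => by
    rw [Finsupp.smul_apply, bd_apply, smul_eq_mul]

def cpsiv (s t : Finset (Fin 6)) : ℤ :=
  if s = {1, 2} then (if t = {0, 2, 5} then -1 else if t = {2, 4, 5} then -1 else if t = {1, 2, 4} then 1 else if t = {0, 1, 4} then 1 else 0)
  else if s = {1, 3} then (if t = {0, 2, 5} then -1 else if t = {2, 4, 5} then -1 else if t = {1, 2, 3} then -1 else if t = {1, 2, 4} then 1 else if t = {0, 2, 3} then 1 else if t = {0, 1, 4} then 1 else 0)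
  else if s = {1, 4} then (if t = {0, 1, 4} then 1 else 0)
  else if s = {1, 5} then (if t = {0, 1, 5} then 1 else 0)
  else if s = {2, 3} then (if t = {0, 2, 3} then 1 else 0)
  else if s = {2, 4} then (if t = {0, 2, 5} then 1 else if t = {2, 4, 5} then 1 else 0)
  else if s = {2, 5} then (if t = {0, 2, 5} then 1 else 0)
  else if s = {3, 4} then (if t = {0, 3, 4} then 1 else 0)
  else if s = {3, 5} then (if t = {0, 1, 5} then 1 else if t = {0, 2, 5} then 1 else if t = {1, 3, 5} then 1 else if t = {2, 4, 5} then 1 else if t = {1, 2, 3} then 1 else if t = {1, 2, 4} then -1 else if t = {0, 2, 3} then -1 else if t = {0, 1, 4} then -1 else 0)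
  else 0

def cphiv (s : Finset (Fin 6)) : ℤ :=
  if s = {1, 2} then 1 else if s = {1, 3} then 1 else if s = {2, 4} then -1
  else if s = {3, 5} then -1 else if s = {4, 5} then 1 else 0

def cetav (v s : Finset (Fin 6)) : ℤ :=
  if v = {1} then (if s = {0, 1} then 1 else 0)
  else if v = {2} then (if s = {0, 2} then 1 else 0)
  else if v = {3} then (if s = {0, 3} then 1 else 0)
  else if v = {4} then (if s = {0, 4} then 1 else 0)
  else if v = {5} then (if s = {0, 5} then 1 else 0)
  else 0

def gv (s : Finset (Fin 6)) : ℤ :=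
  if s = {0, 4} then 1 else if s = {0, 5} then -1 else if s = {4, 5} then 1 else 0

lemma sum_single_apply {ι : Type*} [Fintype ι] [DecidableEq ι] (c : ι → ℤ) (j : ι) :
    (∑ i : ι, c i • (Finsupp.single i (1 : ℤ))) j = c j := by
  rw [Finset.sum_apply']
  have : ∀ i : ι, (c i • Finsupp.single i (1 : ℤ)) j = if i = j then c i else 0 := fun i => by
    rw [Finsupp.smul_apply, Finsupp.single_apply, smul_eq_mul]
    by_cases h : i = j <;> simp [h]
  rw [Finset.sum_congr rfl fun i _ => this i, Finset.sum_ite_eq' Finset.univ j c,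
    if_pos (Finset.mem_univ j)]

noncomputable def phi : Chain P2 1 →ₗ[ℤ] ℤ :=
  Finsupp.lsum ℤ fun e => LinearMap.toSpanSingleton ℤ ℤ (cphiv e.1)

noncomputable def psi : Chain P2 1 →ₗ[ℤ] Chain P2 2 :=
  Finsupp.lsum ℤ fun e => LinearMap.toSpanSingleton ℤ (Chain P2 2)
    (∑ t : Face P2 2, cpsiv e.1 t.1 • Finsupp.single t 1)

noncomputable def eta : Chain P2 0 →ₗ[ℤ] Chain P2 1 :=
  Finsupp.lsum ℤ fun v => LinearMap.toSpanSingleton ℤ (Chain P2 1)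
    (∑ e : Face P2 1, cetav v.1 e.1 • Finsupp.single e 1)

noncomputable def gcyc : Chain P2 1 := ∑ e : Face P2 1, gv e.1 • Finsupp.single e 1

lemma gcyc_apply (e : Face P2 1) : gcyc e = gv e.1 := sum_single_apply _ e

lemma phi_apply (f : Chain P2 1) : phi f = ∑ e : Face P2 1, f e * cphiv e.1 := by
  unfold phi
  rw [Finsupp.lsum_apply, Finsupp.sum_fintype _ _ (fun e => by
    rw [map_zero])]
  exact Finset.sum_congr rfl fun e _ => by
    rw [LinearMap.toSpanSingleton_apply, smul_eq_mul]

lemma psi_apply (f : Chain P2 1) (t : Face P2 2) :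
    psi f t = ∑ e : Face P2 1, f e * cpsiv e.1 t.1 := by
  unfold psi
  rw [Finsupp.lsum_apply, Finsupp.sum_apply,
    Finsupp.sum_fintype _ _ (fun e => by rw [map_zero, Finsupp.zero_apply])]
  exact Finset.sum_congr rfl fun e _ => by
    rw [LinearMap.toSpanSingleton_apply, Finsupp.smul_apply, sum_single_apply, smul_eq_mul]

lemma eta_apply (f : Chain P2 0) (e : Face P2 1) :
    eta f e = ∑ v : Face P2 0, f v * cetav v.1 e.1 := by
  unfold eta
  rw [Finsupp.lsum_apply, Finsupp.sum_apply,
    Finsupp.sum_fintype _ _ (fun v => by rw [map_zero, Finsupp.zero_apply])]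
  exact Finset.sum_congr rfl fun v _ => by
    rw [LinearMap.toSpanSingleton_apply, Finsupp.smul_apply, sum_single_apply, smul_eq_mul]

set_option maxRecDepth 100000 in
lemma keyA : ∀ s : Finset (Fin 6), (s ∈ P2 ∧ s.card = 3) →
    ∑ e : Face P2 1, bdc s e.1 * cphiv e.1 = 0 := by decide

set_option maxRecDepth 100000 in
lemma keyB : ∀ a b : Finset (Fin 6), (a ∈ P2 ∧ a.card = 2) → (b ∈ P2 ∧ b.card = 2) →
    ((∑ t : Face P2 2, cpsiv a t.1 * bdc t.1 b) + (∑ v : Face P2 0, bdc a v.1 * cetav v.1 b)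
      + cphiv a * gv b) = (if a = b then 1 else 0) := by decide

set_option maxRecDepth 100000 in
lemma keyC : ∀ v : Finset (Fin 6), (v ∈ P2 ∧ v.card = 1) →
    ∑ e : Face P2 1, gv e.1 * bdc e.1 v = 0 := by decide

set_option maxRecDepth 100000 in
lemma keyD : ∑ e : Face P2 1, gv e.1 * cphiv e.1 = 1 := by decide

lemma phi_boundary (f : Chain P2 2) : phi (boundary P2 1 f) = 0 := by
  rw [phi_apply]
  calc ∑ e : Face P2 1, (boundary P2 1 f) e * cphiv e.1
      = ∑ e : Face P2 1, ∑ σ : Face P2 2, f σ * (bdc σ.1 e.1 * cphiv e.1) := by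
        refine Finset.sum_congr rfl fun e _ => ?_
        rw [boundary_apply_pt, Finset.sum_mul]
        exact Finset.sum_congr rfl fun σ _ => by ring
    _ = ∑ σ : Face P2 2, f σ * ∑ e : Face P2 1, bdc σ.1 e.1 * cphiv e.1 := by
        rw [Finset.sum_comm]
        exact Finset.sum_congr rfl fun σ _ => by rw [Finset.mul_sum]
    _ = 0 := Finset.sum_eq_zero fun σ _ => by rw [keyA σ.1 σ.2, mul_zero]

lemma main_id (f : Chain P2 1) :
    boundary P2 1 (psi f) + eta (boundary P2 0 f) + phi f • gcyc = f := by
  ext e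
  rw [Finsupp.add_apply, Finsupp.add_apply, Finsupp.smul_apply, gcyc_apply]
  have h1 : (boundary P2 1 (psi f)) e
      = ∑ e' : Face P2 1, f e' * ∑ t : Face P2 2, cpsiv e'.1 t.1 * bdc t.1 e.1 := by
    calc (boundary P2 1 (psi f)) e
        = ∑ t : Face P2 2, ∑ e' : Face P2 1, f e' * (cpsiv e'.1 t.1 * bdc t.1 e.1) := by
          rw [boundary_apply_pt]
          refine Finset.sum_congr rfl fun t _ => ?_
          rw [psi_apply, Finset.sum_mul]
          exact Finset.sum_congr rfl fun e' _ => by ring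
      _ = _ := by
          rw [Finset.sum_comm]
          exact Finset.sum_congr rfl fun e' _ => by rw [Finset.mul_sum]
  have h2 : (eta (boundary P2 0 f)) e
      = ∑ e' : Face P2 1, f e' * ∑ v : Face P2 0, bdc e'.1 v.1 * cetav v.1 e.1 := by
    calc (eta (boundary P2 0 f)) e
        = ∑ v : Face P2 0, ∑ e' : Face P2 1, f e' * (bdc e'.1 v.1 * cetav v.1 e.1) := by
          rw [eta_apply]
          refine Finset.sum_congr rfl fun v _ => ?_
          rw [boundary_apply_pt, Finset.sum_mul]
          exact Finset.sum_congr rfl fun e' _ => by ring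
      _ = _ := by
          rw [Finset.sum_comm]
          exact Finset.sum_congr rfl fun e' _ => by rw [Finset.mul_sum]
  have h3 : phi f • gv e.1 = ∑ e' : Face P2 1, f e' * (cphiv e'.1 * gv e.1) := by
    rw [smul_eq_mul, phi_apply, Finset.sum_mul]
    exact Finset.sum_congr rfl fun e' _ => by ring
  rw [h1, h2, h3, ← Finset.sum_add_distrib, ← Finset.sum_add_distrib]
  calc ∑ e' : Face P2 1,
        (f e' * (∑ t : Face P2 2, cpsiv e'.1 t.1 * bdc t.1 e.1)
          + f e' * (∑ v : Face P2 0, bdc e'.1 v.1 * cetav v.1 e.1)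
          + f e' * (cphiv e'.1 * gv e.1))
      = ∑ e' : Face P2 1, f e' * (if e'.1 = e.1 then 1 else 0) := by
        refine Finset.sum_congr rfl fun e' _ => ?_
        rw [← mul_add, ← mul_add, keyB e'.1 e.1 e'.2 e.2]
    _ = ∑ e' : Face P2 1, (if e' = e then f e' else 0) := by
        refine Finset.sum_congr rfl fun e' _ => ?_
        by_cases h : e' = e
        · rw [if_pos h, if_pos (congrArg Subtype.val h), mul_one]
        · rw [if_neg h, if_neg (fun hh => h (Subtype.ext hh)), mul_zero]
    _ = f e := by rw [Finset.sum_ite_eq' Finset.univ e (fun e' => f e'),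
          if_pos (Finset.mem_univ e)]

lemma gcyc_cycle : boundary P2 0 gcyc = 0 := by
  ext v
  rw [boundary_apply_pt, Finsupp.zero_apply]
  calc ∑ e : Face P2 1, gcyc e * bdc e.1 v.1
      = ∑ e : Face P2 1, gv e.1 * bdc e.1 v.1 :=
        Finset.sum_congr rfl fun e _ => by rw [gcyc_apply]
    _ = 0 := keyC v.1 v.2

lemma phi_gcyc : phi gcyc = 1 := by
  rw [phi_apply]
  calc ∑ e : Face P2 1, gcyc e * cphiv e.1
      = ∑ e : Face P2 1, gv e.1 * cphiv e.1 :=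
        Finset.sum_congr rfl fun e _ => by rw [gcyc_apply]
    _ = 1 := keyD

end Aux

/-- The first integral simplicial homology group of `P(2)` is infinite cyclic. -/
theorem P2_homology_one : Nonempty (Homology P2 1 ≃ₗ[ℤ] ℤ) := by
  unfold Homology
  set N := Submodule.comap (cycles P2 1).subtype (boundaries P2 1) with hN
  have hcyc : ∀ z : Chain P2 1, z ∈ cycles P2 1 ↔ boundary P2 0 z = 0 := fun z =>
    LinearMap.mem_ker
  let F : cycles P2 1 →ₗ[ℤ] ℤ := phi ∘ₗ (cycles P2 1).subtype
  have hNker : N = LinearMap.ker F := by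
    ext z
    rw [hN, Submodule.mem_comap, LinearMap.mem_ker]
    constructor
    · rintro ⟨c, hc⟩
      rw [Submodule.subtype_apply] at hc
      show phi z.1 = 0
      rw [← hc, phi_boundary]
    · intro h0
      have hz0 : boundary P2 0 z.1 = 0 := (hcyc z.1).1 z.2
      have hphi0 : phi z.1 = 0 := h0
      refine ⟨psi z.1, ?_⟩
      have hmain := main_id z.1
      rw [hz0, map_zero, hphi0, zero_smul, add_zero, add_zero] at hmain
      exact hmain
  have hg : gcyc ∈ cycles P2 1 := (hcyc gcyc).2 gcyc_cycle
  have hle : N ≤ LinearMap.ker F := le_of_eq hNker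
  refine ⟨LinearEquiv.ofBijective (Submodule.liftQ N F hle) ⟨?_, ?_⟩⟩
  · rw [← LinearMap.ker_eq_bot]
    exact Submodule.ker_liftQ_eq_bot' N F hNker
  · intro k
    refine ⟨Submodule.mkQ N (k • ⟨gcyc, hg⟩), ?_⟩
    rw [Submodule.mkQ_apply, Submodule.liftQ_apply, map_smul]
    have h1 : F ⟨gcyc, hg⟩ = 1 := phi_gcyc
    rw [h1, smul_eq_mul, mul_one]
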